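/- Let D be a triangulated category with a t-structure 𝒰 = (U^{≤0}, U^{≥0}), let m be a positive integer, and set m-ℋ = U^{≥-(m-1)} ∩ U^{≤0}. Then (m-ℋ[m] * m-ℋ) ∩ (m-ℋ * m-ℋ[-m]) = m-ℋ. -/

import Mathlib

open CategoryTheory Category Limits Pretriangulated

universe v u

variable (D : Type u) [Category.{v} D] [Preadditive D] [HasZeroObject D]
  [HasShift D ℤ] [∀ n : ℤ, (shiftFunctor D n).Additive]
  [Pretriangulated D] [HasBinaryBiproducts D]

/-- `shiftSet D S n` is the full subcategory `S[n]`: objects isomorphic to `X⟦n⟧`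
with `X ∈ S`. -/
def shiftSet (S : Set D) (n : ℤ) : Set D :=
  {A | ∃ B ∈ S, Nonempty (A ≅ B⟦n⟧)}

/-- `starSet D X Y` is `X * Y`: the class of objects `A` admitting a distinguished
triangle `X → A → Y → X[1]` with `X ∈ 𝒳` and `Y ∈ 𝒴`. -/
def starSet (X Y : Set D) : Set D :=
  {A | ∃ (B C : D) (f : B ⟶ A) (g : A ⟶ C) (h : C ⟶ B⟦(1 : ℤ)⟧),
    B ∈ X ∧ C ∈ Y ∧ Triangle.mk f g h ∈ distTriang D}

/-- `Hom(X, Y) = 0`: every morphism from an object of `X` to an object of `Y` is zero. -/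
def homZero (X Y : Set D) : Prop :=
  ∀ A ∈ X, ∀ B ∈ Y, ∀ f : A ⟶ B, f = 0

/-- a class of objects closed under isomorphisms -/
def isoClosed (S : Set D) : Prop :=
  ∀ ⦃A B : D⦄, (A ≅ B) → A ∈ S → B ∈ S

/-- an additive full subcategory (closed under isomorphisms) which is closed under
direct summands -/
structure AdditiveClosed (S : Set D) : Prop where
  iso : isoClosed D S
  zero : ∀ Z : D, IsZero Z → Z ∈ S
  sum : ∀ A ∈ S, ∀ B ∈ S, (A ⊞ B) ∈ S
  summand : ∀ A ∈ S, ∀ (X : D) (i : X ⟶ A) (p : A ⟶ X), i ≫ p = 𝟙 X → X ∈ S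

/-- a torsion pair `(U, V)` in the triangulated category `D` -/
structure IsTorsionPair (U V : Set D) : Prop where
  addU : AdditiveClosed D U
  addV : AdditiveClosed D V
  hom_zero : homZero D U V
  cover : ∀ A : D, A ∈ starSet D U V

/-- `t₁ ≼ t₂` for torsion pairs in a triangulated category: `U₁ ⊆ U₂` and `U₁[1] ⊆ U₂`. -/
def torsLE (U₁ U₂ : Set D) : Prop :=
  U₁ ⊆ U₂ ∧ shiftSet D U₁ 1 ⊆ U₂

/-- a torsion pair `(T, F)` in an (extension-closed) full subcategory `H` of `D`:
`T` and `F` are additive subcategories of `H` closed under direct summands,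
`Hom(T, F) = 0`, and every object of `H` admits a distinguished triangle
`T → X → F → T[1]` with `T ∈ 𝒯`, `F ∈ ℱ`. -/
structure IsTorsionPairIn (H T F : Set D) : Prop where
  subT : T ⊆ H
  subF : F ⊆ H
  isoT : ∀ ⦃A B : D⦄, (A ≅ B) → A ∈ T → B ∈ H → B ∈ T
  isoF : ∀ ⦃A B : D⦄, (A ≅ B) → A ∈ F → B ∈ H → B ∈ F
  zeroT : ∀ Z : D, IsZero Z → Z ∈ H → Z ∈ T
  zeroF : ∀ Z : D, IsZero Z → Z ∈ H → Z ∈ F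
  sumT : ∀ A ∈ T, ∀ B ∈ T, (A ⊞ B) ∈ T
  sumF : ∀ A ∈ F, ∀ B ∈ F, (A ⊞ B) ∈ F
  summandT : ∀ A ∈ T, ∀ (X : D) (i : X ⟶ A) (p : A ⟶ X), i ≫ p = 𝟙 X → X ∈ H → X ∈ T
  summandF : ∀ A ∈ F, ∀ (X : D) (i : X ⟶ A) (p : A ⟶ X), i ≫ p = 𝟙 X → X ∈ H → X ∈ F
  hom_zero : homZero D T F
  cover : ∀ A ∈ H, A ∈ starSet D T F

/-- an `s`-torsion pair in `H`: a torsion pair with moreover `Hom(T, F[-1]) = 0`. -/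
structure IsSTorsionPairIn (H T F : Set D) extends IsTorsionPairIn D H T F : Prop where
  neg_hom_zero : ∀ A ∈ T, ∀ B ∈ F, ∀ f : A ⟶ B⟦(-1 : ℤ)⟧, f = 0

/-- the relation `≼` for torsion pairs in a subcategory `H`:
`Hom(T, F') = 0` and `Hom(T, F'[-1]) = 0`. -/
def torsLEIn (T F' : Set D) : Prop :=
  homZero D T F' ∧ homZero D T (shiftSet D F' (-1))

/-- a `t`-structure `(L, G) = (S^{≤0}, S^{≥0})` on a triangulated (full) subcategory `S`
of `D` (take `S = Set.univ` for a `t`-structure on `D` itself). -/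
structure IsTStructureOn (S L G : Set D) : Prop where
  subL : L ⊆ S
  subG : G ⊆ S
  isoL : ∀ ⦃A B : D⦄, (A ≅ B) → A ∈ L → B ∈ S → B ∈ L
  isoG : ∀ ⦃A B : D⦄, (A ≅ B) → A ∈ G → B ∈ S → B ∈ G
  hom_zero : homZero D L (shiftSet D G (-1))
  cover : ∀ A ∈ S, A ∈ starSet D L (shiftSet D G (-1))
  shiftL : L ⊆ shiftSet D L (-1)
  shiftG : shiftSet D G (-1) ⊆ G

/-- a `t`-structure `(L, G) = (D^{≤0}, D^{≥0})` on `D`. -/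
def IsTStructure (L G : Set D) : Prop := IsTStructureOn D Set.univ L G

/-- a triangulated full subcategory of `D`. -/
structure IsTriangulatedSub (S : Set D) : Prop where
  iso : isoClosed D S
  zero : ∀ Z : D, IsZero Z → Z ∈ S
  shift : ∀ (n : ℤ), ∀ A ∈ S, A⟦n⟧ ∈ S
  ext₂ : ∀ (T : Triangle D), (T ∈ distTriang D) → T.obj₁ ∈ S → T.obj₃ ∈ S → T.obj₂ ∈ S

/-- an `m`-extended heart on `D`: a full subcategory of the form
`V^{≥ -(m-1)} ∩ V^{≤ 0}` for some `t`-structure `(V^{≤0}, V^{≥0})` on `D`. -/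
def IsExtendedHeart (m : ℤ) (E : Set D) : Prop :=
  ∃ L G : Set D, IsTStructure D L G ∧ E = shiftSet D G (m - 1) ∩ L

/-- the relation `E₁ ≤ E₂` for `m`-extended hearts:
`E₁ ⊆ E₂[m] * E₂` and `E₂ ⊆ E₁ * E₁[-m]`. -/
def extHeartLE (m : ℤ) (E₁ E₂ : Set D) : Prop :=
  E₁ ⊆ starSet D (shiftSet D E₂ m) E₂ ∧ E₂ ⊆ starSet D E₁ (shiftSet D E₁ (-m))
section Stmt10Aux

open ZeroObject

set_option linter.unusedSectionVars false

variable {D : Type u} [Category.{v} D] [Preadditive D] [HasZeroObject D]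
  [HasShift D ℤ] [∀ n : ℤ, (shiftFunctor D n).Additive]
  [Pretriangulated D] [HasBinaryBiproducts D]

/-- composition of shifts, as an isomorphism -/
noncomputable def shAdd (A : D) (a b c : ℤ) (h : a + b = c) : A⟦a⟧⟦b⟧ ≅ A⟦c⟧ :=
  ((shiftFunctorAdd' D a b c h).app A).symm

lemma shiftSet_iso {S : Set D} {n : ℤ} {A B : D} (e : A ≅ B) (hA : A ∈ shiftSet D S n) :
    B ∈ shiftSet D S n := by
  obtain ⟨P, hP, ⟨e'⟩⟩ := hA
  exact ⟨P, hP, ⟨e.symm.trans e'⟩⟩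

lemma mem_shiftSet_self {S : Set D} {A : D} (hA : A ∈ S) (n : ℤ) : A⟦n⟧ ∈ shiftSet D S n :=
  ⟨A, hA, ⟨Iso.refl _⟩⟩

lemma mem_shiftSet_zero {S : Set D} {A : D} (hA : A ∈ S) : A ∈ shiftSet D S 0 :=
  ⟨A, hA, ⟨((shiftFunctorZero D ℤ).app A).symm⟩⟩

lemma shiftSet_shift {S : Set D} {A : D} {a : ℤ} (h : A ∈ shiftSet D S a) (b c : ℤ)
    (hc : a + b = c) : A⟦b⟧ ∈ shiftSet D S c := by
  obtain ⟨P, hP, ⟨e⟩⟩ := h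
  exact ⟨P, hP, ⟨(shiftFunctor D b).mapIso e ≪≫ shAdd P a b c hc⟩⟩

lemma shiftSet_shiftSet {S : Set D} {A : D} {a b : ℤ} (c : ℤ) (hc : a + b = c)
    (h : A ∈ shiftSet D (shiftSet D S a) b) : A ∈ shiftSet D S c := by
  obtain ⟨P, ⟨Q, hQ, ⟨e₂⟩⟩, ⟨e₁⟩⟩ := h
  exact ⟨Q, hQ, ⟨e₁ ≪≫ (shiftFunctor D b).mapIso e₂ ≪≫ shAdd Q a b c hc⟩⟩

lemma shiftSet_mono {S S' : Set D} (h : S ⊆ S') (n : ℤ) : shiftSet D S n ⊆ shiftSet D S' n := by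
  rintro A ⟨P, hP, e⟩
  exact ⟨P, h hP, e⟩

lemma isZero_shift {A : D} (h : IsZero A) (n : ℤ) : IsZero (A⟦n⟧) := by
  rw [IsZero.iff_id_eq_zero] at h ⊢
  rw [← (shiftFunctor D n).map_id, h, Functor.map_zero]

lemma isZero_of_shift {A : D} (n : ℤ) (h : IsZero (A⟦n⟧)) : IsZero A := by
  rw [IsZero.iff_id_eq_zero] at h ⊢
  rw [← (shiftFunctor D n).map_id] at h
  exact ((shiftFunctor D n).map_eq_zero_iff).mp h

variable {L G : Set D} (hU : IsTStructureOn D Set.univ L G)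
include hU

lemma L_iso {A B : D} (e : A ≅ B) (hA : A ∈ L) : B ∈ L := hU.isoL e hA (Set.mem_univ B)

lemma G_iso {A B : D} (e : A ≅ B) (hA : A ∈ G) : B ∈ G := hU.isoG e hA (Set.mem_univ B)

lemma L_shift1 {A : D} (hA : A ∈ L) : A⟦(1 : ℤ)⟧ ∈ L := by
  obtain ⟨B, hB, ⟨e⟩⟩ := hU.shiftL hA
  exact L_iso hU ((shiftFunctor D (1 : ℤ)).mapIso e ≪≫ shAdd B (-1) 1 0 (by ring) ≪≫
    (shiftFunctorZero D ℤ).app B).symm hB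

lemma L_shift_nat (n : ℕ) {A : D} (hA : A ∈ L) : A⟦(n : ℤ)⟧ ∈ L := by
  induction n with
  | zero => exact L_iso hU ((shiftFunctorZero D ℤ).app A).symm hA
  | succ k ih =>
      exact L_iso hU (shAdd A k 1 ((k + 1 : ℕ) : ℤ) (by push_cast; ring)) (L_shift1 hU ih)

lemma L_shift {a : ℤ} (ha : 0 ≤ a) {A : D} (hA : A ∈ L) : A⟦a⟧ ∈ L := by
  obtain ⟨n, rfl⟩ := Int.eq_ofNat_of_zero_le ha
  exact L_shift_nat hU n hA

lemma G_shift_neg1 {A : D} (hA : A ∈ G) : A⟦(-1 : ℤ)⟧ ∈ G :=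
  hU.shiftG (mem_shiftSet_self hA (-1))

lemma G_shift_nat (n : ℕ) {A : D} (hA : A ∈ G) : A⟦-(n : ℤ)⟧ ∈ G := by
  induction n with
  | zero => exact G_iso hU ((shiftFunctorZero D ℤ).app A).symm hA
  | succ k ih =>
      exact G_iso hU (shAdd A (-(k : ℤ)) (-1) (-((k + 1 : ℕ) : ℤ)) (by push_cast; ring))
        (G_shift_neg1 hU ih)

lemma G_shift {a : ℤ} (ha : a ≤ 0) {A : D} (hA : A ∈ G) : A⟦a⟧ ∈ G := by
  obtain ⟨n, hn⟩ := Int.eq_ofNat_of_zero_le (by omega : (0 : ℤ) ≤ -a)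
  have : a = -(n : ℤ) := by omega
  rw [this]
  exact G_shift_nat hU n hA

lemma shiftSetG_mono {a b : ℤ} (hab : a ≤ b) : shiftSet D G a ⊆ shiftSet D G b := by
  rintro A ⟨Q, hQ, ⟨e⟩⟩
  exact ⟨Q⟦a - b⟧, G_shift hU (by omega) hQ, ⟨e ≪≫ (shAdd Q (a - b) b a (by ring)).symm⟩⟩

lemma homLG {a b : ℤ} (hab : b < a) {X Y : D} (hX : X ∈ shiftSet D L a)
    (hY : Y ∈ shiftSet D G b) (f : X ⟶ Y) : f = 0 := by
  obtain ⟨P, hP, ⟨e₁⟩⟩ := hX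
  obtain ⟨Q, hQ, ⟨e₂⟩⟩ := hY
  suffices hg : e₁.inv ≫ f ≫ e₂.hom = 0 by
    have : f = e₁.hom ≫ (e₁.inv ≫ f ≫ e₂.hom) ≫ e₂.inv := by simp
    rw [this, hg, zero_comp, comp_zero]
  set g : P⟦a⟧ ⟶ Q⟦b⟧ := e₁.inv ≫ f ≫ e₂.hom
  rw [← (shiftFunctor D (-a)).map_eq_zero_iff]
  have v : P⟦a⟧⟦-a⟧ ≅ P := shAdd P a (-a) 0 (by ring) ≪≫ (shiftFunctorZero D ℤ).app P
  have w : Q⟦b⟧⟦-a⟧ ≅ (Q⟦b - a + 1⟧)⟦(-1 : ℤ)⟧ :=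
    shAdd Q b (-a) (b - a) (by ring) ≪≫ (shAdd Q (b - a + 1) (-1) (b - a) (by ring)).symm
  have hmem₁ : P⟦a⟧⟦-a⟧ ∈ L := L_iso hU v.symm hP
  have hmem₂ : Q⟦b⟧⟦-a⟧ ∈ shiftSet D G (-1) := ⟨Q⟦b - a + 1⟧, G_shift hU (by omega) hQ, ⟨w⟩⟩
  exact hU.hom_zero _ hmem₁ _ hmem₂ _

lemma zero_mem (Z : D) (hZ : IsZero Z) : Z ∈ L ∧ Z ∈ G := by
  obtain ⟨B, C, f, g, h, hB, hC, hdist⟩ := hU.cover Z (Set.mem_univ Z)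
  haveI : IsIso h := (Triangle.isZero₂_iff_isIso₃ (Triangle.mk f g h) hdist).mp hZ
  have hinv : (asIso h).inv = 0 :=
    homLG hU (by omega : (-1 : ℤ) < 1) (mem_shiftSet_self hB 1) hC _
  have hC0 : IsZero C := by
    rw [IsZero.iff_id_eq_zero, ← (asIso h).hom_inv_id, hinv, comp_zero]
  have hB0 : IsZero B := by
    refine isZero_of_shift 1 ?_
    rw [IsZero.iff_id_eq_zero, ← (asIso h).inv_hom_id, hinv, zero_comp]
  obtain ⟨Q, hQ, ⟨e⟩⟩ := hC
  have hQ0 : IsZero Q := isZero_of_shift (-1) (hC0.of_iso e.symm)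
  exact ⟨L_iso hU (hB0.iso hZ) hB, G_iso hU (hQ0.iso hZ) hQ⟩

lemma ext_L (T : Triangle D) (hT : T ∈ distTriang D) (h1 : T.obj₁ ∈ L) (h3 : T.obj₃ ∈ L) :
    T.obj₂ ∈ L := by
  obtain ⟨B, C, f, g, h, hB, hC, hdist⟩ := hU.cover T.obj₂ (Set.mem_univ _)
  have hg : g = 0 := by
    obtain ⟨k, hk⟩ := Triangle.yoneda_exact₂ T hT g
      (homLG hU (by omega : (-1 : ℤ) < 0) (mem_shiftSet_zero h1) hC _)
    rw [hk, homLG hU (by omega : (-1 : ℤ) < 0) (mem_shiftSet_zero h3) hC k, comp_zero]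
  have hC0 : IsZero C := by
    obtain ⟨r, hr⟩ := Triangle.yoneda_exact₃ (Triangle.mk f g h) hdist (𝟙 C)
      (by simp [hg]; exact zero_comp)
    rw [IsZero.iff_id_eq_zero, hr,
      homLG hU (by omega : (-1 : ℤ) < 1) (mem_shiftSet_self hB 1) hC r]
    exact comp_zero
  haveI : IsIso f := (Triangle.isZero₃_iff_isIso₁ (Triangle.mk f g h) hdist).mp hC0
  exact L_iso hU (asIso f) hB

lemma ext_Gneg1 (T : Triangle D) (hT : T ∈ distTriang D) (h1 : T.obj₁ ∈ shiftSet D G (-1))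
    (h3 : T.obj₃ ∈ shiftSet D G (-1)) : T.obj₂ ∈ shiftSet D G (-1) := by
  obtain ⟨B, C, f, g, h, hB, hC, hdist⟩ := hU.cover T.obj₂ (Set.mem_univ _)
  have hf : f = 0 := by
    obtain ⟨k, hk⟩ := Triangle.coyoneda_exact₂ T hT f
      (homLG hU (by omega : (-1 : ℤ) < 0) (mem_shiftSet_zero hB) h3 _)
    rw [hk, homLG hU (by omega : (-1 : ℤ) < 0) (mem_shiftSet_zero hB) h1 k, zero_comp]
  have hB0 : IsZero B := by
    obtain ⟨s, hs⟩ := Triangle.coyoneda_exact₂ (Triangle.mk f g h).invRotate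
      (inv_rot_of_distTriang _ hdist) (𝟙 B) (by simp [Triangle.invRotate, hf]; exact comp_zero)
    have hs0 : s = 0 :=
      homLG hU (by omega : (-2 : ℤ) < 0) (mem_shiftSet_zero hB)
        (shiftSet_shift hC (-1) (-2) (by ring)) s
    rw [IsZero.iff_id_eq_zero, hs, hs0, zero_comp]
    rfl
  haveI : IsIso g := (Triangle.isZero₁_iff_isIso₂ (Triangle.mk f g h) hdist).mp hB0
  exact shiftSet_iso (asIso g).symm hC

omit hU in
lemma dist_shift {B A C : D} {f : B ⟶ A} {g : A ⟶ C} {h : C ⟶ B⟦(1 : ℤ)⟧}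
    (hd : Triangle.mk f g h ∈ distTriang D) (n : ℤ) :
    ∃ (f' : B⟦n⟧ ⟶ A⟦n⟧) (g' : A⟦n⟧ ⟶ C⟦n⟧) (h' : C⟦n⟧ ⟶ B⟦n⟧⟦(1 : ℤ)⟧),
      Triangle.mk f' g' h' ∈ distTriang D := by
  have hT : (Triangle.shiftFunctor D n).obj (Triangle.mk f g h) ∈ distTriang D :=
    Triangle.shift_distinguished (Triangle.mk f g h) hd n
  exact ⟨_, _, _, hT⟩

end Stmt10Aux

/-- Lemma 4.3 (3): `(m-ℋ[m] * m-ℋ) ∩ (m-ℋ * m-ℋ[-m]) = m-ℋ`. -/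
theorem stmt10 (L G : Set D) (hU : IsTStructure D L G) (m : ℤ) (hm : 1 ≤ m)
    (H : Set D) (hH : H = shiftSet D G (m - 1) ∩ L) :
    starSet D (shiftSet D H m) H ∩ starSet D H (shiftSet D H (-m)) = H := by
  open ZeroObject in
  have hU' : IsTStructureOn D Set.univ L G := hU
  subst hH
  set H : Set D := shiftSet D G (m - 1) ∩ L with hH
  have hHL : H ⊆ L := fun A hA => hA.2
  have hHG : H ⊆ shiftSet D G (m - 1) := fun A hA => hA.1
  ext A
  simp only [Set.mem_inter_iff]
  constructor
  · rintro ⟨⟨B, C, f, g, h, hB, hC, hd⟩, ⟨B', C', f', g', h', hB', hC', hd'⟩⟩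
    have memL : A ∈ L := by
      have hBL : B ∈ L := by
        obtain ⟨P, hP, ⟨e⟩⟩ := hB
        exact L_iso hU' e.symm (L_shift hU' (by omega) (hHL hP))
      exact ext_L hU' (Triangle.mk f g h) hd hBL (hHL hC)
    have memG : A ∈ shiftSet D G (m - 1) := by
      obtain ⟨f'', g'', h'', hd''⟩ := dist_shift hd' (-m)
      have m1 : B'⟦-m⟧ ∈ shiftSet D G (-1) :=
        shiftSet_shift (hHG hB') (-m) (-1) (by ring)
      have m3 : C'⟦-m⟧ ∈ shiftSet D G (-1) := by
        have : C' ∈ shiftSet D G (-1) :=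
          shiftSet_shiftSet (-1) (by ring) (shiftSet_mono hHG (-m) hC')
        exact shiftSetG_mono hU' (by omega : (-1 : ℤ) - m ≤ -1)
          (shiftSet_shift this (-m) (-1 - m) (by ring))
      have hAm : A⟦-m⟧ ∈ shiftSet D G (-1) :=
        ext_Gneg1 hU' (Triangle.mk f'' g'' h'') hd'' m1 m3
      refine shiftSet_iso (shAdd A (-m) m 0 (by ring) ≪≫ (shiftFunctorZero D ℤ).app A) ?_
      exact shiftSet_shift hAm m (m - 1) (by ring)
    exact ⟨memG, memL⟩
  · intro hA
    have hz : (0 : D) ∈ H := by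
      have h0 : IsZero (0 : D) := isZero_zero D
      obtain ⟨h0L, h0G⟩ := zero_mem hU' 0 h0
      exact ⟨⟨0, h0G, ⟨h0.iso (isZero_shift h0 (m - 1))⟩⟩, h0L⟩
    have hzm : (0 : D) ∈ shiftSet D H m := ⟨0, hz, ⟨(isZero_zero D).iso (isZero_shift (isZero_zero D) m)⟩⟩
    have hzm' : (0 : D) ∈ shiftSet D H (-m) := ⟨0, hz, ⟨(isZero_zero D).iso (isZero_shift (isZero_zero D) (-m))⟩⟩
    exact ⟨⟨0, A, 0, 𝟙 A, 0, hzm, hA, contractible_distinguished₁ A⟩,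
      ⟨A, 0, 𝟙 A, 0, 0, hA, hzm', contractible_distinguished A⟩⟩
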